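/- For every finite simple graph G, a(G^{×2}) ≥ a(G), where a(K) = max{|U|/(|U| + |N_K(U)|) : U a nonempty independent set of K} and G^{×2} is the categorical square of G. -/

import Mathlib

open scoped Classical
open Filter

/-- Categorical (tensor) product of two simple graphs. -/
def tensorProd {α β : Type*} (G : SimpleGraph α) (H : SimpleGraph β) :
    SimpleGraph (α × β) where
  Adj p q := G.Adj p.1 q.1 ∧ H.Adj p.2 q.2
  symm := ⟨fun p q h => ⟨h.1.symm, h.2.symm⟩⟩
  loopless := ⟨fun p h => G.irrefl h.1⟩

/-- A finset is independent. -/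
def IsIndep {α : Type*} (G : SimpleGraph α) (U : Finset α) : Prop :=
  ∀ u ∈ U, ∀ v ∈ U, ¬ G.Adj u v

/-- Neighborhood of a finset. -/
noncomputable def nbhd {α : Type*} [Fintype α] (G : SimpleGraph α) (U : Finset α) : Finset α :=
  Finset.univ.filter (fun v => ∃ u ∈ U, G.Adj u v)

/-- Independence number. -/
noncomputable def alphaNum {α : Type*} [Fintype α] (G : SimpleGraph α) : ℕ :=
  sSup {n : ℕ | ∃ U : Finset α, IsIndep G U ∧ U.card = n}

/-- Independence ratio. -/
noncomputable def iRatio {α : Type*} [Fintype α] (G : SimpleGraph α) : ℝ :=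
  (alphaNum G : ℝ) / (Fintype.card α : ℝ)

/-- a(G): the maximum of |U|/(|U|+|N(U)|) over nonempty independent sets. -/
noncomputable def aRatio {α : Type*} [Fintype α] (G : SimpleGraph α) : ℝ :=
  sSup {r : ℝ | ∃ U : Finset α, U.Nonempty ∧ IsIndep G U ∧
    r = (U.card : ℝ) / ((U.card : ℝ) + ((nbhd G U).card : ℝ))}

/-- b(G): the minimum of |N(U)|/|U| over nonempty independent sets. -/
noncomputable def bRatio {α : Type*} [Fintype α] (G : SimpleGraph α) : ℝ :=
  sInf {r : ℝ | ∃ U : Finset α, U.Nonempty ∧ IsIndep G U ∧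
    r = ((nbhd G U).card : ℝ) / (U.card : ℝ)}

/-- a*(G). -/
noncomputable def aStar {α : Type*} [Fintype α] (G : SimpleGraph α) : ℝ :=
  if aRatio G ≤ 1/2 then aRatio G else 1

/-- k-th categorical power of G. -/
def tensorPow {α : Type*} (G : SimpleGraph α) (k : ℕ) : SimpleGraph (Fin k → α) where
  Adj x y := x ≠ y ∧ ∀ i, G.Adj (x i) (y i)
  symm := ⟨fun x y h => ⟨h.1.symm, fun i => (h.2 i).symm⟩⟩
  loopless := ⟨fun x h => h.1 rfl⟩

/-- Disjoint union of two simple graphs. -/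
def disjUnion {α β : Type*} (G : SimpleGraph α) (H : SimpleGraph β) :
    SimpleGraph (α ⊕ β) where
  Adj p q := match p, q with
    | Sum.inl a, Sum.inl b => G.Adj a b
    | Sum.inr a, Sum.inr b => H.Adj a b
    | _, _ => False
  symm := by constructor; rintro (a|a) (b|b) h <;> simp_all <;> exact h.symm
  loopless := by constructor; rintro (a|a) h <;> simp_all

theorem stmt6 {α : Type*} [Fintype α] [Nonempty α] (G : SimpleGraph α) :
    aRatio G ≤ aRatio (tensorProd G G) := by
  have n : ℕ := Fintype.card α
  -- BddAbove of the target set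
  have hbdd : BddAbove {r : ℝ | ∃ U : Finset (α × α), U.Nonempty ∧ IsIndep (tensorProd G G) U ∧
      r = (U.card : ℝ) / ((U.card : ℝ) + ((nbhd (tensorProd G G) U).card : ℝ))} := by
    refine ⟨1, ?_⟩
    rintro r ⟨U, hUne, _, rfl⟩
    have hU : (0:ℝ) < U.card := by exact_mod_cast Finset.card_pos.mpr hUne
    have hN : (0:ℝ) ≤ ((nbhd (tensorProd G G) U).card : ℝ) := by positivity
    rw [div_le_one (by linarith)]
    linarith
  -- source set nonempty
  have hSne : {r : ℝ | ∃ U : Finset α, U.Nonempty ∧ IsIndep G U ∧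
      r = (U.card : ℝ) / ((U.card : ℝ) + ((nbhd G U).card : ℝ))}.Nonempty := by
    obtain ⟨a⟩ := ‹Nonempty α›
    exact ⟨_, ({a} : Finset α), Finset.singleton_nonempty a, by
      intro u hu v hv
      simp only [Finset.mem_singleton] at hu hv
      subst hu; subst hv; exact G.irrefl, rfl⟩
  apply csSup_le hSne
  rintro r ⟨U, hUne, hUind, rfl⟩
  set W : Finset (α × α) := U ×ˢ Finset.univ with hW
  have hWind : IsIndep (tensorProd G G) W := by
    rintro ⟨u1, v1⟩ hu ⟨u2, v2⟩ hv hadj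
    simp only [hW, Finset.mem_product] at hu hv
    exact hUind u1 hu.1 u2 hv.1 hadj.1
  have hWne : W.Nonempty := by
    obtain ⟨u, hu⟩ := hUne
    exact ⟨(u, Classical.arbitrary α), by simp [hW, hu]⟩
  have hWcard : (W.card : ℝ) = (U.card : ℝ) * (Fintype.card α : ℝ) := by
    simp [hW, Finset.card_product]
  have hNsub : nbhd (tensorProd G G) W ⊆ (nbhd G U) ×ˢ Finset.univ := by
    rintro ⟨v, w⟩ hv
    simp only [nbhd, Finset.mem_filter, Finset.mem_univ, true_and] at hv
    obtain ⟨⟨u, x⟩, hu, hadj⟩ := hv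
    simp only [hW, Finset.mem_product] at hu
    simp only [nbhd, Finset.mem_product, Finset.mem_filter, Finset.mem_univ, true_and]
    exact ⟨⟨u, hu.1, hadj.1⟩, trivial⟩
  have hNcard : ((nbhd (tensorProd G G) W).card : ℝ) ≤
      ((nbhd G U).card : ℝ) * (Fintype.card α : ℝ) := by
    have := Finset.card_le_card hNsub
    rw [Finset.card_product] at this
    exact_mod_cast this
  refine le_csSup_of_le hbdd ⟨W, hWne, hWind, rfl⟩ ?_
  have hUpos : (0:ℝ) < U.card := by exact_mod_cast Finset.card_pos.mpr hUne
  have hnpos : (0:ℝ) < (Fintype.card α : ℝ) := by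
    exact_mod_cast Fintype.card_pos
  have hNU : (0:ℝ) ≤ ((nbhd G U).card : ℝ) := by positivity
  have hNW : (0:ℝ) ≤ ((nbhd (tensorProd G G) W).card : ℝ) := by positivity
  rw [hWcard]
  have key : (U.card : ℝ) * (Fintype.card α) /
      ((U.card : ℝ) * (Fintype.card α) + ((nbhd G U).card : ℝ) * (Fintype.card α)) ≤
      (U.card : ℝ) * (Fintype.card α) /
      ((U.card : ℝ) * (Fintype.card α) + ((nbhd (tensorProd G G) W).card : ℝ)) := by
    apply div_le_div_of_nonneg_left (by positivity) (by positivity)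
    linarith
  calc (U.card : ℝ) / ((U.card : ℝ) + ((nbhd G U).card : ℝ))
      = (U.card : ℝ) * (Fintype.card α) /
        ((U.card : ℝ) * (Fintype.card α) + ((nbhd G U).card : ℝ) * (Fintype.card α)) := by
        rw [← add_mul, mul_div_mul_right _ _ (ne_of_gt hnpos)]
    _ ≤ _ := key
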